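/- Let (f_n) be a frame in H with analysis operator U. A bounded operator V : H → ℓ² satisfies V*U = I if and only if V* = (U*U)^{-1} U* F for some bounded idempotent F on ℓ² with range Im U. -/

import Mathlib

open scoped InnerProductSpace

noncomputable section

abbrev ell2 : Type := lp (fun _ : ℕ => ℂ) 2

def IsFrame {H : Type*} [NormedAddCommGroup H] [InnerProductSpace ℂ H]
    (f : ℕ → H) : Prop :=
  ∃ A B : ℝ, 0 < A ∧ 0 < B ∧ ∀ x : H,
    A * ‖x‖ ^ 2 ≤ ∑' n, ‖⟪x, f n⟫_ℂ‖ ^ 2 ∧ ∑' n, ‖⟪x, f n⟫_ℂ‖ ^ 2 ≤ B * ‖x‖ ^ 2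

def IsAnalysisOp {H : Type*} [NormedAddCommGroup H] [InnerProductSpace ℂ H]
    (f : ℕ → H) (U : H →L[ℂ] ell2) : Prop :=
  ∀ (x : H) (n : ℕ), (U x : ∀ _ : ℕ, ℂ) n = ⟪x, f n⟫_ℂ

/-- General form of the synthesis operators of dual frames: `V* U = I` iff
`V* = (U*U)⁻¹ U* F` for some bounded oblique projection `F` onto `Im U`.
Here `R` denotes the inverse of the frame operator `U*U`. -/
theorem dual_iff_adjoint_eq_inv_comp_proj
    {H : Type*} [NormedAddCommGroup H] [InnerProductSpace ℂ H] [CompleteSpace H]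
    (f : ℕ → H) (hf : IsFrame f)
    (U : H →L[ℂ] ell2) (hU : IsAnalysisOp f U)
    (R : H →L[ℂ] H)
    (hR₁ : R ∘L ((ContinuousLinearMap.adjoint U) ∘L U) = ContinuousLinearMap.id ℂ H)
    (hR₂ : ((ContinuousLinearMap.adjoint U) ∘L U) ∘L R = ContinuousLinearMap.id ℂ H)
    (V : H →L[ℂ] ell2) :
    (ContinuousLinearMap.adjoint V) ∘L U = ContinuousLinearMap.id ℂ H ↔
      ∃ F : ell2 →L[ℂ] ell2, F ∘L F = F ∧ LinearMap.range (F : ell2 →ₗ[ℂ] ell2) = LinearMap.range (U : H →ₗ[ℂ] ell2) ∧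
        ContinuousLinearMap.adjoint V = (R ∘L ContinuousLinearMap.adjoint U) ∘L F := by
  constructor
  · intro h
    refine ⟨U ∘L ContinuousLinearMap.adjoint V, ?_, ?_, ?_⟩
    · calc (U ∘L ContinuousLinearMap.adjoint V) ∘L (U ∘L ContinuousLinearMap.adjoint V)
          = U ∘L ((ContinuousLinearMap.adjoint V ∘L U) ∘L ContinuousLinearMap.adjoint V) := by
            simp [ContinuousLinearMap.comp_assoc]
        _ = U ∘L ContinuousLinearMap.adjoint V := by rw [h]; simp
    · apply le_antisymm
      · rintro y ⟨x, rfl⟩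
        exact ⟨ContinuousLinearMap.adjoint V x, rfl⟩
      · rintro y ⟨x, rfl⟩
        refine ⟨U x, ?_⟩
        have := DFunLike.congr_fun h x
        simp only [ContinuousLinearMap.coe_comp', Function.comp_apply,
          ContinuousLinearMap.coe_id', id_eq] at this ⊢
        show U (ContinuousLinearMap.adjoint V (U x)) = U x
        rw [this]
    · calc ContinuousLinearMap.adjoint V
          = (R ∘L (ContinuousLinearMap.adjoint U ∘L U)) ∘L ContinuousLinearMap.adjoint V := by
            rw [hR₁]; simp
        _ = (R ∘L ContinuousLinearMap.adjoint U) ∘L (U ∘L ContinuousLinearMap.adjoint V) := by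
            simp [ContinuousLinearMap.comp_assoc]
  · rintro ⟨F, hFF, hrange, hV⟩
    have hFU : F ∘L U = U := by
      ext x
      have hx : U x ∈ LinearMap.range (F : ell2 →ₗ[ℂ] ell2) := hrange ▸ ⟨x, rfl⟩
      obtain ⟨y, hy⟩ := hx
      change F y = U x at hy
      have := DFunLike.congr_fun hFF y
      simp only [ContinuousLinearMap.coe_comp', Function.comp_apply] at this
      simp only [ContinuousLinearMap.coe_comp', Function.comp_apply]
      rw [← hy, this]
    calc ContinuousLinearMap.adjoint V ∘L U
        = (R ∘L ContinuousLinearMap.adjoint U) ∘L (F ∘L U) := by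
          rw [hV, ContinuousLinearMap.comp_assoc]
      _ = R ∘L (ContinuousLinearMap.adjoint U ∘L U) := by
          rw [hFU, ContinuousLinearMap.comp_assoc]
      _ = ContinuousLinearMap.id ℂ H := hR₁
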